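/- Let C ≥ 2 be a natural number and let c : Fin C be a class index. Let R and U be finite index types (the remaining and unlearning data). Let δ, N₂, γ, M be positive reals, and suppose: for each x in R there are u_x, v_x : Fin C → ℝ and an index i_x with u_x i_x - u_x j ≥ δ for all j ≠ i_x, and |v_x k| ≤ N₂ for all k; and for each x in U there are u_x, v_x : Fin C → ℝ with v_x c - v_x j ≥ γ for all j ≠ c, and |u_x k| ≤ M for all k. If 4 * M * N₂ < δ * γ, then there exists β > 0 such that: (1) for every x in R, i_x is the unique strict argmax of u_x - β • v_x (i.e., u_x j - β * v_x j < u_x i_x - β * v_x i_x for all j ≠ i_x); and (2) for every x in U, c is not an argmax of u_x - β • v_x (i.e., there exists j ≠ c with u_x j - β * v_x j > u_x c - β * v_x c). -/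
import Mathlib

/-- Theorem 1 (class unlearning, stated at the level of logit vectors with
explicit constants): if `4 M N₂ < δ γ`, there is a single `β > 0` such that
`u_x - β • v_x` keeps the argmax `i_x` on every remaining datum `x`, and on
every unlearning datum the class `c` is no longer an argmax. -/
theorem fedau_class_unlearning
    (C : ℕ) (hC : 2 ≤ C) (c : Fin C)
    (R U : Type*) [Fintype R] [Fintype U]
    (δ N₂ γ M : ℝ) (hδ : 0 < δ) (hN₂ : 0 < N₂) (hγ : 0 < γ) (hM : 0 < M)
    (uR vR : R → Fin C → ℝ) (iR : R → Fin C)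
    (hgapR : ∀ x : R, ∀ j : Fin C, j ≠ iR x → δ ≤ uR x (iR x) - uR x j)
    (hboundR : ∀ x : R, ∀ k : Fin C, |vR x k| ≤ N₂)
    (uU vU : U → Fin C → ℝ)
    (hgapU : ∀ x : U, ∀ j : Fin C, j ≠ c → γ ≤ vU x c - vU x j)
    (hboundU : ∀ x : U, ∀ k : Fin C, |uU x k| ≤ M)
    (hconst : 4 * M * N₂ < δ * γ) :
    ∃ β : ℝ, 0 < β ∧
      (∀ x : R, ∀ j : Fin C, j ≠ iR x →
        uR x j - β * vR x j < uR x (iR x) - β * vR x (iR x)) ∧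
      (∀ x : U, ∃ j : Fin C, j ≠ c ∧
        uU x c - β * vU x c < uU x j - β * vU x j) := by
  have hlt : 2 * M / γ < δ / (2 * N₂) := by
    rw [div_lt_div_iff₀ hγ (by positivity)]
    nlinarith
  set β : ℝ := (2 * M / γ + δ / (2 * N₂)) / 2 with hβ
  have hβlo : 2 * M / γ < β := by rw [hβ]; linarith
  have hβhi : β < δ / (2 * N₂) := by rw [hβ]; linarith
  have hβpos : 0 < β := lt_trans (by positivity) hβlo
  have h1 : 2 * β * N₂ < δ := by
    have := (lt_div_iff₀ (by positivity : (0:ℝ) < 2 * N₂)).mp hβhi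
    linarith
  have h2 : 2 * M < β * γ := by
    have := (div_lt_iff₀ hγ).mp hβlo
    linarith
  refine ⟨β, hβpos, ?_, ?_⟩
  · intro x j hj
    have hg := hgapR x j hj
    have hvj := abs_le.mp (hboundR x j)
    have hvi := abs_le.mp (hboundR x (iR x))
    nlinarith [hβpos.le]
  · intro x
    obtain ⟨j, hj⟩ : ∃ j : Fin C, j ≠ c := by
      have : Nontrivial (Fin C) := Fin.nontrivial_iff_two_le.mpr hC
      exact exists_ne c
    refine ⟨j, hj, ?_⟩
    have hg := hgapU x j hj
    have huj := abs_le.mp (hboundU x j)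
    have huc := abs_le.mp (hboundU x c)
    nlinarith [hβpos.le]
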